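/- Let $a > 0$, $l > 0$, and set $\nu = \pi/l$. If $\lambda \in \mathbb{C}^*$ satisfies $(a - \lambda)^2 e^{2 i \lambda l} = (a + \lambda)^2$ and $\lambda^2$ is not a real eigenvalue (i.e., assume additionally that $\lambda \notin \mathbb{R}$), then $\mathrm{Re}(\lambda) \notin \nu \mathbb{N}$. More precisely: if $\mathrm{Re}(\lambda) \in \nu\mathbb{N}$ and $(a-\lambda)^2 e^{2i\lambda l} = (a+\lambda)^2$ with $\lambda \neq a$, then either $a = 0$ or $\lambda \in \mathbb{R}$. -/

import Mathlib

/-- If `Re λ ∈ ν ℕ` (with `ν = π / l`) and `(a - λ)² e^{2iλl} = (a + λ)²` with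
`λ ≠ a`, then either `a = 0` or `λ ∈ ℝ`.  In particular, for `a > 0` no
eigenvalue parameter `λ ∉ ℝ` can have real part in `ν ℕ`. -/
theorem re_not_in_nuN
    (a l : ℝ) (hl : 0 < l) (lam : ℂ) (hne : lam ≠ (a : ℂ))
    (hre : ∃ n : ℕ, lam.re = (n : ℝ) * (Real.pi / l))
    (heq : ((a : ℂ) - lam) ^ 2 * Complex.exp (2 * Complex.I * lam * (l : ℂ))
      = ((a : ℂ) + lam) ^ 2) :
    a = 0 ∨ lam.im = 0 := by
  obtain ⟨n, hn⟩ := hre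
  set t : ℝ := Real.exp (-2 * l * lam.im) with ht_def
  have ht : 0 < t := Real.exp_pos _
  have hsplit : 2 * Complex.I * lam * (l : ℂ)
      = (↑(-2 * l * lam.im) : ℂ) + (n : ℤ) * (2 * (Real.pi : ℂ) * Complex.I) := by
    rw [Complex.ext_iff]
    constructor
    · simp [Complex.mul_re, Complex.mul_im, hn]
      ring
    · simp [Complex.mul_re, Complex.mul_im, hn]
      field_simp
  have hE : Complex.exp (2 * Complex.I * lam * (l : ℂ)) = (t : ℂ) := by
    rw [hsplit, Complex.exp_add, Complex.exp_int_mul_two_pi_mul_I, mul_one,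
      ← Complex.ofReal_exp]
  rw [hE] at heq
  have hw : (a : ℂ) - lam ≠ 0 := sub_ne_zero.mpr hne.symm
  set u : ℂ := ((a : ℂ) + lam) / ((a : ℂ) - lam) with hu_def
  have hu2 : u ^ 2 = (t : ℂ) := by
    rw [hu_def, div_pow, ← heq]
    field_simp
  have hre' : u.re * u.re - u.im * u.im = t := by
    have := congrArg Complex.re hu2
    simpa [pow_two, Complex.mul_re] using this
  have him' : u.re * u.im + u.im * u.re = 0 := by
    have := congrArg Complex.im hu2
    simpa [pow_two, Complex.mul_im] using this
  have hium : u.im = 0 := by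
    by_contra h
    have hre0 : u.re = 0 := by
      rcases mul_eq_zero.mp (by linarith : u.re * u.im = 0) with h' | h'
      · exact h'
      · exact absurd h' h
    nlinarith [sq_nonneg u.im, mul_self_pos.mpr h]
  set r : ℝ := u.re with hr_def
  have hu : u = (r : ℂ) := Complex.ext rfl (by simpa using hium)
  have hkey : (a : ℂ) + lam = (r : ℂ) * ((a : ℂ) - lam) := by
    have := div_eq_iff hw |>.mp (hu ▸ hu_def.symm)
    linear_combination this
  by_cases hr : r = -1
  · left
    rw [hr] at hkey
    have : (a : ℂ) = 0 := by push_cast at hkey; linear_combination hkey / 2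
    exact_mod_cast this
  · right
    have h1 : lam * ((1 : ℂ) + r) = (a : ℂ) * ((r : ℂ) - 1) := by
      linear_combination hkey
    have h2 := congrArg Complex.im h1
    simp [Complex.mul_im, Complex.add_im] at h2
    have hr1 : (1 : ℝ) + r ≠ 0 := by
      intro h'; apply hr; linarith
    rcases h2 with h' | h'
    · exact h'
    · exact absurd h' hr1
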